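/- Nonnegativity criterion with an L∞ bound and a subdomain Poincaré constant (Corollary A.1, Lipschitz formulation): Let N ≥ 1, let Ω ⊆ ℝ^N be a bounded open set, and let λ₁ > 0 and 0 ≤ λ < λ₁ be reals. Let n ≥ 1, and for each i ∈ {1,…,n} let aᵢ ≥ 0, pᵢ > 1 and Cᵢ > 0 be reals. Let f : ℝ → ℝ be continuous with −f(−t) ≤ λt + Σ_{i=1}^n aᵢ t^{pᵢ} for all t ≥ 0. Let û and u be Lipschitz test functions on Ω, let r ≥ 0 satisfy |u(x) − û(x)| ≤ r for all x ∈ Ω, and set Ω₀ := interior (Ω \ {x ∈ Ω : û(x) − r > 0}). Assume: (Poincaré inequality on Ω₀) λ₁ ∫ v(x)² dx ≤ ∫ ‖fderiv ℝ v x‖² dx for every Lipschitz test function v on Ω₀; (Sobolev embedding on Ω) for each i, (∫ |v(x)|^{pᵢ+1} dx)^{1/(pᵢ+1)} ≤ Cᵢ (∫ ‖fderiv ℝ v x‖² dx)^{1/2} for every Lipschitz test function v on Ω; and that u is a weak solution of −Δu = f(u) on Ω, i.e., ∫ ⟨∇u(x), ∇v(x)⟩ dx = ∫ f(u(x)) v(x)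 dx for every Lipschitz test function v on Ω. Let ρ ≥ 0 satisfy ∫ ‖fderiv ℝ (u − û) x‖² dx ≤ ρ². If Σ_{i=1}^n aᵢ Cᵢ² ( (∫ (û_-(x))^{pᵢ+1} dx)^{1/(pᵢ+1)} + Cᵢ ρ )^{pᵢ−1} < 1 − λ/λ₁, then u(x) ≥ 0 for all x ∈ ℝ^N. -/

import Mathlib

open MeasureTheory Real Set
open scoped RealInnerProductSpace

/-- A Lipschitz test function on an open set `Ω ⊆ ℝ^N`: a Lipschitz function
vanishing outside `Ω`. -/
def IsLipTest {N : ℕ} (Ω : Set (EuclideanSpace ℝ (Fin N)))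
    (v : EuclideanSpace ℝ (Fin N) → ℝ) : Prop :=
  (∃ K, LipschitzWith K v) ∧ ∀ x, x ∉ Ω → v x = 0

/-- Integrability of a bounded a.e.-measurable function vanishing outside a bounded set. -/
lemma integrable_of_bdd_compl {N : ℕ} {g : EuclideanSpace ℝ (Fin N) → ℝ}
    (hg : AEStronglyMeasurable g volume) {s : Set (EuclideanSpace ℝ (Fin N))}
    (hs : Bornology.IsBounded s) (h0 : ∀ x ∉ s, g x = 0) {M : ℝ}
    (hM : ∀ x, |g x| ≤ M) : Integrable g := by
  have hKc : IsCompact (closure s) := hs.isCompact_closure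
  have hmeas : MeasurableSet (closure s) := isClosed_closure.measurableSet
  have hind : Integrable ((closure s).indicator fun _ => M) := by
    rw [integrable_indicator_iff hmeas]
    exact integrableOn_const hKc.measure_lt_top.ne
  refine hind.mono' hg (Filter.Eventually.of_forall fun x => ?_)
  by_cases hx : x ∈ closure s
  · simpa [Set.indicator_of_mem hx, Real.norm_eq_abs] using hM x
  · have hxs : x ∉ s := fun h => hx (subset_closure h)
    simp [Set.indicator_of_notMem hx, h0 x hxs, Real.norm_eq_abs]

/-- Minkowski inequality in the raw-integral form we need. -/
lemma Lq_triangle {α : Type*} [MeasurableSpace α] {μ : Measure α} {g₁ g₂ : α → ℝ} {q : ℝ}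
    (hq : 1 ≤ q) (h₁ : MemLp g₁ (ENNReal.ofReal q) μ) (h₂ : MemLp g₂ (ENNReal.ofReal q) μ) :
    (∫ x, |g₁ x + g₂ x| ^ q ∂μ) ^ (1/q) ≤
      (∫ x, |g₁ x| ^ q ∂μ) ^ (1/q) + (∫ x, |g₂ x| ^ q ∂μ) ^ (1/q) := by
  have hq0 : (0:ℝ) < q := lt_of_lt_of_le one_pos hq
  have hP0 : ENNReal.ofReal q ≠ 0 := by
    simp only [ne_eq, ENNReal.ofReal_eq_zero, not_le]; linarith
  have hPt : ENNReal.ofReal q ≠ ⊤ := ENNReal.ofReal_ne_top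
  have htR : (ENNReal.ofReal q).toReal = q := ENNReal.toReal_ofReal hq0.le
  have hsum : MemLp (g₁ + g₂) (ENNReal.ofReal q) μ := h₁.add h₂
  have h3 := eLpNorm_add_le h₁.aestronglyMeasurable h₂.aestronglyMeasurable
    (ENNReal.one_le_ofReal.2 hq)
  have e1 : 0 ≤ (∫ x, ‖g₁ x‖ ^ q ∂μ) ^ q⁻¹ :=
    Real.rpow_nonneg (integral_nonneg fun x => Real.rpow_nonneg (norm_nonneg _) _) _
  have e2 : 0 ≤ (∫ x, ‖g₂ x‖ ^ q ∂μ) ^ q⁻¹ :=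
    Real.rpow_nonneg (integral_nonneg fun x => Real.rpow_nonneg (norm_nonneg _) _) _
  rw [hsum.eLpNorm_eq_integral_rpow_norm hP0 hPt, h₁.eLpNorm_eq_integral_rpow_norm hP0 hPt,
      h₂.eLpNorm_eq_integral_rpow_norm hP0 hPt, htR,
      ← ENNReal.ofReal_add e1 e2, ENNReal.ofReal_le_ofReal_iff (by positivity)] at h3
  simpa [Real.norm_eq_abs, one_div, Pi.add_apply] using h3

/-- The elementary per-index estimate. -/
lemma aux_arith (a C ρ D X Y p : ℝ) (ha : 0 ≤ a) (hC : 0 < C) (hρ : 0 ≤ ρ) (hD : 0 ≤ D)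
    (hp1 : 1 < p) (hX0 : 0 ≤ X) (hY0 : 0 ≤ Y)
    (hX1 : X ≤ C * D ^ ((1:ℝ)/2)) (hX2 : X ≤ Y + C * ρ) :
    a * X ^ (p + 1) ≤ a * C^2 * (Y + C*ρ) ^ (p-1) * D := by
  have hYC : 0 ≤ Y + C * ρ := by positivity
  rcases eq_or_lt_of_le hX0 with h0 | h0
  · rw [← h0, Real.zero_rpow (by intro h; linarith)]
    have : 0 ≤ a * C^2 * (Y + C*ρ) ^ (p-1) * D := by positivity
    linarith [this]
  · have hsq : X^(2:ℕ) ≤ C^2 * D := by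
      calc X^(2:ℕ) ≤ (C * D ^ ((1:ℝ)/2))^(2:ℕ) := pow_le_pow_left₀ hX0 hX1 2
        _ = C^2 * (D ^ ((1:ℝ)/2))^(2:ℕ) := by ring
        _ = C^2 * D := by
            rw [← Real.rpow_natCast (D ^ ((1:ℝ)/2)) 2, ← Real.rpow_mul hD]
            norm_num
    have hXp : X ^ (p - 1) ≤ (Y + C*ρ) ^ (p-1) :=
      Real.rpow_le_rpow hX0 hX2 (by linarith)
    have hsplit : X ^ (p + 1) = X ^ (p - 1) * X ^ (2:ℕ) := by
      rw [← Real.rpow_natCast X 2, ← Real.rpow_add h0]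
      congr 1
      ring
    calc a * X ^ (p+1) = a * (X ^ (p-1) * X^(2:ℕ)) := by rw [hsplit]
      _ ≤ a * ((Y + C*ρ)^(p-1) * (C^2 * D)) := by
          apply mul_le_mul_of_nonneg_left _ ha
          exact mul_le_mul hXp hsq (by positivity) (Real.rpow_nonneg hYC _)
      _ = a * C^2 * (Y + C*ρ)^(p-1) * D := by ring

/-- Final elementary combination. -/
lemma aux_final (lam lam₁ D W2 S T : ℝ) (hlam0 : 0 ≤ lam) (hlam₁ : 0 < lam₁)
    (hD : 0 ≤ D) (hW2 : 0 ≤ W2) (hPo : lam₁ * W2 ≤ D) (hDle : D ≤ lam * W2 + S)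
    (hS : S ≤ T * D) (hcond : T < 1 - lam / lam₁) : D = 0 ∧ W2 = 0 := by
  have h1 : lam * W2 ≤ lam / lam₁ * D := by
    rw [div_mul_eq_mul_div, le_div_iff₀ hlam₁]
    calc lam * W2 * lam₁ = lam * (lam₁ * W2) := by ring
      _ ≤ lam * D := mul_le_mul_of_nonneg_left hPo hlam0
  have h2 : D ≤ (lam / lam₁ + T) * D := by nlinarith
  have h3 : lam / lam₁ + T < 1 := by linarith
  have hD0 : D = 0 := by nlinarith
  refine ⟨hD0, ?_⟩
  rw [hD0] at hPo
  nlinarith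

/-- Nonnegativity criterion with an `L∞` bound and a Poincaré constant on the
subdomain `Ω₀ = interior (Ω \ {x ∈ Ω : û(x) - r > 0})`
(Corollary A.1, Lipschitz formulation). -/
theorem nonneg_of_Linf_bound_subdomain
    {N : ℕ} (hN : 1 ≤ N)
    (Ω : Set (EuclideanSpace ℝ (Fin N))) (hΩo : IsOpen Ω)
    (hΩb : Bornology.IsBounded Ω)
    (lam₁ lam : ℝ) (hlam₁ : 0 < lam₁) (hlam0 : 0 ≤ lam) (hlam : lam < lam₁)
    (n : ℕ) (hn : 1 ≤ n) (a p C : ℕ → ℝ)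
    (ha : ∀ i ∈ Finset.Icc 1 n, 0 ≤ a i)
    (hp : ∀ i ∈ Finset.Icc 1 n, 1 < p i)
    (hC : ∀ i ∈ Finset.Icc 1 n, 0 < C i)
    (f : ℝ → ℝ) (hf : Continuous f)
    (hfb : ∀ t : ℝ, 0 ≤ t →
      -f (-t) ≤ lam * t + ∑ i ∈ Finset.Icc 1 n, a i * t ^ (p i))
    (uhat u : EuclideanSpace ℝ (Fin N) → ℝ)
    (huhat : IsLipTest Ω uhat) (hu : IsLipTest Ω u)
    (r : ℝ) (hr : 0 ≤ r) (hLinf : ∀ x ∈ Ω, |u x - uhat x| ≤ r)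
    (hPoincare : ∀ v, IsLipTest (interior (Ω \ {x ∈ Ω | 0 < uhat x - r})) v →
      lam₁ * ∫ x, (v x) ^ 2 ≤ ∫ x, ‖fderiv ℝ v x‖ ^ 2)
    (hSobolev : ∀ i ∈ Finset.Icc 1 n, ∀ v, IsLipTest Ω v →
      (∫ x, |v x| ^ (p i + 1)) ^ (1 / (p i + 1)) ≤
        C i * (∫ x, ‖fderiv ℝ v x‖ ^ 2) ^ ((1 : ℝ) / 2))
    (hweak : ∀ v, IsLipTest Ω v →
      ∫ x, ⟪gradient u x, gradient v x⟫ = ∫ x, f (u x) * v x)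
    (ρ : ℝ) (hρ : 0 ≤ ρ)
    (herr : ∫ x, ‖fderiv ℝ (u - uhat) x‖ ^ 2 ≤ ρ ^ 2)
    (hcond : ∑ i ∈ Finset.Icc 1 n,
        a i * C i ^ 2 *
          ((∫ x, (max (-uhat x) 0) ^ (p i + 1)) ^ (1 / (p i + 1)) + C i * ρ)
            ^ (p i - 1)
        < 1 - lam / lam₁) :
    ∀ x, 0 ≤ u x := by
  classical
  obtain ⟨⟨Ku, hKu⟩, hu0⟩ := hu
  obtain ⟨⟨Kh, hKh⟩, huhat0⟩ := huhat
  have hucont : Continuous u := hKu.continuous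
  have hhcont : Continuous uhat := hKh.continuous
  set w : EuclideanSpace ℝ (Fin N) → ℝ := fun x => max (-u x) 0 with hwdef
  have hwlip : LipschitzWith Ku w := (hKu.neg).max_const 0
  have hwcont : Continuous w := hwlip.continuous
  have hw0 : ∀ x, 0 ≤ w x := fun x => le_max_right _ _
  have hwΩ0 : ∀ x, x ∉ Ω → w x = 0 := fun x hx => by simp [hwdef, hu0 x hx]
  -- compact support from vanishing outside Ω
  have hHCS : ∀ g : EuclideanSpace ℝ (Fin N) → ℝ, (∀ x ∉ Ω, g x = 0) →
      HasCompactSupport g := by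
    intro g hg
    exact IsCompact.of_isClosed_subset hΩb.isCompact_closure (isClosed_tsupport g)
      (closure_mono fun x hx => by_contra fun h => hx (hg x h))
  -- w vanishes outside Ω₀
  have hwΩ₀ : ∀ x, x ∉ interior (Ω \ {x ∈ Ω | 0 < uhat x - r}) → w x = 0 := by
    intro x hx
    have hsub : (Ω \ {x ∈ Ω | 0 < uhat x - r})ᶜ ⊆ {y | w y = 0} := by
      intro y hy
      by_cases hyΩ : y ∈ Ω
      · have hyT : y ∈ {x ∈ Ω | 0 < uhat x - r} := by
          by_contra hcon
          exact hy ⟨hyΩ, hcon⟩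
        have h1 : 0 < uhat y - r := hyT.2
        have h2 : |u y - uhat y| ≤ r := hLinf y hyΩ
        have h3 : 0 < u y := by
          have := abs_le.1 h2
          linarith [this.1]
        simp only [hwdef]
        exact max_eq_right (by linarith)
      · simp [hwdef, hu0 y hyΩ]
    have hclosed : IsClosed {y | w y = 0} := isClosed_eq hwcont continuous_const
    have hcl : closure ((Ω \ {x ∈ Ω | 0 < uhat x - r})ᶜ) ⊆ {y | w y = 0} :=
      hclosed.closure_subset_iff.2 hsub
    apply hcl
    rw [closure_compl]
    exact hx
  have hwΩ : IsLipTest Ω w := ⟨⟨Ku, hwlip⟩, hwΩ0⟩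
  have hwtest₀ : IsLipTest (interior (Ω \ {x ∈ Ω | 0 < uhat x - r})) w :=
    ⟨⟨Ku, hwlip⟩, hwΩ₀⟩
  have hcsw : HasCompactSupport w := hHCS w hwΩ0
  -- pointwise fderiv of w
  have hfw : ∀ x, fderiv ℝ w x = if u x < 0 then -(fderiv ℝ u x) else 0 := by
    intro x
    by_cases hx : u x < 0
    · rw [if_pos hx]
      have hopen : IsOpen {y | u y < 0} := isOpen_lt hucont continuous_const
      have hev : w =ᶠ[nhds x] fun y => -u y := by
        filter_upwards [hopen.mem_nhds hx] with y hy
        exact max_eq_left (by simpa using (le_of_lt hy))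
      rw [hev.fderiv_eq, fderiv_fun_neg]
    · rw [if_neg hx]
      push_neg at hx
      have hwx : w x = 0 := max_eq_right (by linarith)
      have hmin : IsLocalMin w x := Filter.Eventually.of_forall fun y => by
        rw [hwx]; exact hw0 y
      exact hmin.fderiv_eq_zero
  -- gradient identity
  have hgradw : ∀ x, ⟪gradient u x, gradient w x⟫ = -(‖fderiv ℝ w x‖^2) := by
    intro x
    have hgdef : ∀ g : EuclideanSpace ℝ (Fin N) → ℝ, ∀ y,
        gradient g y = (InnerProductSpace.toDual ℝ _).symm (fderiv ℝ g y) := fun _ _ => rfl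
    by_cases hx : u x < 0
    · have h1 : fderiv ℝ w x = -(fderiv ℝ u x) := by rw [hfw x, if_pos hx]
      have h2 : gradient w x = -gradient u x := by
        rw [hgdef, hgdef, h1, map_neg]
      rw [h2, inner_neg_right, real_inner_self_eq_norm_sq, h1, norm_neg]
      rw [hgdef, LinearIsometryEquiv.norm_map]
    · have h1 : fderiv ℝ w x = 0 := by rw [hfw x, if_neg hx]
      have h2 : gradient w x = 0 := by rw [hgdef, h1, map_zero]
      rw [h2, inner_zero_right, h1]
      simp
  -- u = -w where w > 0
  have hwneg : ∀ x, 0 < w x → u x = -(w x) := by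
    intro x hx
    have hneg : u x < 0 := by
      by_contra hcon
      push_neg at hcon
      have : w x = 0 := max_eq_right (by linarith)
      linarith
    have : w x = -u x := max_eq_left (by linarith)
    linarith
  -- integrability
  have I1 : Integrable (fun x => f (u x) * w x) := by
    apply Continuous.integrable_of_hasCompactSupport ((hf.comp hucont).mul hwcont)
    exact hcsw.mul_left
  have I2 : Integrable (fun x => ‖fderiv ℝ w x‖^2) := by
    apply integrable_of_bdd_compl (M := (Ku:ℝ)^2)
      ((measurable_fderiv ℝ w).norm.pow_const 2).aestronglyMeasurable
      (s := tsupport w) hcsw.isBounded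
    case hM =>
      intro x
      rw [abs_of_nonneg (by positivity)]
      exact pow_le_pow_left₀ (norm_nonneg _) (norm_fderiv_le_of_lipschitz ℝ hwlip) 2
    case h0 =>
      intro x hx
      have hns : x ∉ Function.support (fderiv ℝ w) := fun h => hx (support_fderiv_subset ℝ h)
      have h1 : fderiv ℝ w x = 0 := Function.notMem_support.1 hns
      simp [h1]
  have Iw2 : Integrable (fun x => (w x)^2) := by
    apply Continuous.integrable_of_hasCompactSupport (hwcont.pow 2)
    rw [show w ^ 2 = (fun t : ℝ => t^2) ∘ w from funext fun x => by simp]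
    exact hcsw.comp_left (g := fun t : ℝ => t^2) (by norm_num)
  have Irpow : ∀ q : ℝ, 0 < q → ∀ g : EuclideanSpace ℝ (Fin N) → ℝ, Continuous g →
      HasCompactSupport g → Integrable (fun x => |g x| ^ q) := by
    intro q hq g hg hcs
    apply Continuous.integrable_of_hasCompactSupport
    · exact (hg.abs).rpow_const (fun x => Or.inr hq.le)
    · exact hcs.comp_left (g := fun t : ℝ => |t| ^ q) (by simp [Real.zero_rpow hq.ne'])
  have hmem : ∀ g : EuclideanSpace ℝ (Fin N) → ℝ, Continuous g → HasCompactSupport g →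
      ∀ P : ENNReal, MemLp g P volume := by
    intro g hg hcs P
    obtain ⟨Cg, hCg⟩ := hg.bounded_above_of_compact_support hcs
    exact hcs.memLp_of_bound hg.aestronglyMeasurable Cg (Filter.Eventually.of_forall hCg)
  have Iq : ∀ i ∈ Finset.Icc 1 n, Integrable (fun x => (w x) ^ (p i + 1)) := by
    intro i hi
    have heq : (fun x => (w x) ^ (p i + 1)) = fun x => |w x| ^ (p i + 1) :=
      funext fun x => by rw [abs_of_nonneg (hw0 x)]
    rw [heq]
    exact Irpow _ (by linarith [hp i hi]) w hwcont hcsw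
  -- the main quantity
  set D := ∫ x, ‖fderiv ℝ w x‖^2 with hDdef
  have hD0 : 0 ≤ D := integral_nonneg fun x => by positivity
  -- Step A: weak formulation
  have hA : D = -∫ x, f (u x) * w x := by
    have h0 := hweak w hwΩ
    simp only [hgradw] at h0
    rw [integral_neg] at h0
    rw [hDdef]
    linarith
  -- Step B: pointwise bound
  have hpt : ∀ x, -(f (u x) * w x) ≤
      lam * (w x)^2 + ∑ i ∈ Finset.Icc 1 n, a i * (w x) ^ (p i + 1) := by
    intro x
    rcases eq_or_lt_of_le (hw0 x) with h0 | h0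
    · rw [← h0]
      have hz : ∑ i ∈ Finset.Icc 1 n, a i * (0:ℝ) ^ (p i + 1) = 0 :=
        Finset.sum_eq_zero fun i hi => by
          rw [Real.zero_rpow (by have := hp i hi; intro hcon; linarith), mul_zero]
      rw [hz]
      simp
    · have hux : u x = -(w x) := hwneg x h0
      have hb := hfb (w x) (hw0 x)
      have hmul := mul_le_mul_of_nonneg_right hb (hw0 x)
      calc -(f (u x) * w x) = (-f (-(w x))) * w x := by rw [hux]; ring
        _ ≤ (lam * w x + ∑ i ∈ Finset.Icc 1 n, a i * (w x) ^ (p i)) * w x := hmul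
        _ = lam * (w x)^2 + ∑ i ∈ Finset.Icc 1 n, a i * (w x) ^ (p i + 1) := by
            rw [add_mul, Finset.sum_mul]
            congr 1
            · ring
            · exact Finset.sum_congr rfl fun i hi => by
                rw [mul_assoc, ← Real.rpow_add_one h0.ne']
  -- Step C
  have hDle : D ≤ lam * (∫ x, (w x)^2)
      + ∑ i ∈ Finset.Icc 1 n, a i * ∫ x, (w x) ^ (p i + 1) := by
    have IRHS : Integrable (fun x => lam * (w x)^2
        + ∑ i ∈ Finset.Icc 1 n, a i * (w x) ^ (p i + 1)) :=
      (Iw2.const_mul lam).add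
        (integrable_finset_sum _ fun i hi => (Iq i hi).const_mul (a i))
    calc D = ∫ x, -(f (u x) * w x) := by rw [hA, ← integral_neg]
      _ ≤ ∫ x, (lam * (w x)^2 + ∑ i ∈ Finset.Icc 1 n, a i * (w x) ^ (p i + 1)) :=
          integral_mono I1.neg IRHS hpt
      _ = lam * (∫ x, (w x)^2) + ∑ i ∈ Finset.Icc 1 n, a i * ∫ x, (w x) ^ (p i + 1) := by
          rw [integral_add (Iw2.const_mul lam)
            (integrable_finset_sum _ fun i hi => (Iq i hi).const_mul (a i)),
            integral_const_mul,
            integral_finset_sum _ (fun i hi => (Iq i hi).const_mul (a i))]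
          simp only [integral_const_mul]
  -- Poincaré
  have hPo : lam₁ * ∫ x, (w x)^2 ≤ D := hPoincare w hwtest₀
  have hW2nn : 0 ≤ ∫ x, (w x)^2 := integral_nonneg fun x => sq_nonneg _
  -- materials for per-index estimates
  have hdiffTest : IsLipTest Ω (u - uhat) :=
    ⟨⟨Ku + Kh, hKu.sub hKh⟩, fun x hx => by simp [hu0 x hx, huhat0 x hx]⟩
  have hdiffcont : Continuous (u - uhat) := hucont.sub hhcont
  have hcsdiff : HasCompactSupport (u - uhat) := hHCS _ hdiffTest.2
  have hg₁cont : Continuous (fun x => max (-uhat x) 0) :=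
    (hhcont.neg).max continuous_const
  have hg₁0 : ∀ x, x ∉ Ω → max (-uhat x) 0 = 0 := fun x hx => by simp [huhat0 x hx]
  have hcsg₁ : HasCompactSupport (fun x => max (-uhat x) 0) := hHCS _ hg₁0
  have hg₂cont : Continuous (fun x => w x - max (-uhat x) 0) := hwcont.sub hg₁cont
  have hg₂0 : ∀ x, x ∉ Ω → w x - max (-uhat x) 0 = 0 := fun x hx => by
    simp [hwΩ0 x hx, huhat0 x hx]
  have hcsg₂ : HasCompactSupport (fun x => w x - max (-uhat x) 0) := hHCS _ hg₂0
  -- per-index bound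
  have hperi : ∀ i ∈ Finset.Icc 1 n, a i * (∫ x, (w x) ^ (p i + 1)) ≤
      (a i * C i^2 * ((∫ x, (max (-uhat x) 0) ^ (p i + 1)) ^ (1/(p i + 1)) + C i * ρ)
        ^ (p i - 1)) * D := by
    intro i hi
    have hpi := hp i hi
    have hCi := hC i hi
    have hq0 : (0:ℝ) < p i + 1 := by linarith
    have hq1 : (1:ℝ) ≤ p i + 1 := by linarith
    have habsw : (fun x => |w x| ^ (p i + 1)) = fun x => (w x) ^ (p i + 1) :=
      funext fun x => by rw [abs_of_nonneg (hw0 x)]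
    have habsg₁ : (fun x => |max (-uhat x) 0| ^ (p i + 1))
        = fun x => (max (-uhat x) 0) ^ (p i + 1) :=
      funext fun x => by rw [abs_of_nonneg (le_max_right _ _)]
    have hQnn : 0 ≤ ∫ x, (w x) ^ (p i + 1) :=
      integral_nonneg fun x => Real.rpow_nonneg (hw0 x) _
    have hYnn : 0 ≤ (∫ x, (max (-uhat x) 0) ^ (p i + 1)) ^ (1/(p i + 1)) :=
      Real.rpow_nonneg (integral_nonneg fun x => Real.rpow_nonneg (le_max_right _ _) _) _
    have hXQ : ((∫ x, (w x) ^ (p i + 1)) ^ (1/(p i + 1))) ^ (p i + 1)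
        = ∫ x, (w x) ^ (p i + 1) := by
      rw [← Real.rpow_mul hQnn, one_div_mul_cancel hq0.ne', Real.rpow_one]
    -- Sobolev for w
    have hS1 := hSobolev i hi w hwΩ
    rw [habsw, ← hDdef] at hS1
    -- Sobolev for u - uhat and the error bound
    have hS2 := hSobolev i hi (u - uhat) hdiffTest
    have hEnn : (∫ x, ‖fderiv ℝ (u - uhat) x‖^2) ^ ((1:ℝ)/2) ≤ ρ := by
      have h1 : 0 ≤ ∫ x, ‖fderiv ℝ (u - uhat) x‖^2 := integral_nonneg fun x => by positivity
      calc (∫ x, ‖fderiv ℝ (u - uhat) x‖^2) ^ ((1:ℝ)/2) ≤ ((ρ:ℝ)^2) ^ ((1:ℝ)/2) :=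
          Real.rpow_le_rpow h1 herr (by norm_num)
        _ = ρ := by
            rw [← Real.rpow_natCast ρ 2, ← Real.rpow_mul hρ]
            norm_num
    have hZ : (∫ x, |(u - uhat) x| ^ (p i + 1)) ^ (1/(p i + 1)) ≤ C i * ρ :=
      le_trans hS2 (mul_le_mul_of_nonneg_left hEnn hCi.le)
    -- Minkowski
    have hMk : (∫ x, |max (-uhat x) 0 + (w x - max (-uhat x) 0)| ^ (p i + 1)) ^ (1/(p i + 1)) ≤
        (∫ x, |max (-uhat x) 0| ^ (p i + 1)) ^ (1/(p i + 1)) +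
        (∫ x, |w x - max (-uhat x) 0| ^ (p i + 1)) ^ (1/(p i + 1)) :=
      Lq_triangle hq1 (hmem _ hg₁cont hcsg₁ _) (hmem _ hg₂cont hcsg₂ _)
    have hsumeq : (fun x => |max (-uhat x) 0 + (w x - max (-uhat x) 0)| ^ (p i + 1))
        = fun x => (w x) ^ (p i + 1) := funext fun x => by
      rw [show max (-uhat x) 0 + (w x - max (-uhat x) 0) = w x by ring,
        abs_of_nonneg (hw0 x)]
    rw [hsumeq, habsg₁] at hMk
    -- bounding the second Minkowski term
    have hptw : ∀ x, |w x - max (-uhat x) 0| ^ (p i + 1) ≤ |(u - uhat) x| ^ (p i + 1) := by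
      intro x
      apply Real.rpow_le_rpow (abs_nonneg _) _ hq0.le
      calc |w x - max (-uhat x) 0| ≤ |(-u x) - (-uhat x)| := abs_max_sub_max_le_abs _ _ _
        _ = |(u - uhat) x| := by
            rw [Pi.sub_apply, show -u x - -uhat x = -(u x - uhat x) by ring, abs_neg]
    have hmono : (∫ x, |w x - max (-uhat x) 0| ^ (p i + 1)) ^ (1/(p i + 1))
        ≤ (∫ x, |(u - uhat) x| ^ (p i + 1)) ^ (1/(p i + 1)) :=
      Real.rpow_le_rpow (integral_nonneg fun x => Real.rpow_nonneg (abs_nonneg _) _)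
        (integral_mono (Irpow _ hq0 _ hg₂cont hcsg₂) (Irpow _ hq0 _ hdiffcont hcsdiff) hptw)
        (by positivity)
    have hX2 : (∫ x, (w x) ^ (p i + 1)) ^ (1/(p i + 1)) ≤
        (∫ x, (max (-uhat x) 0) ^ (p i + 1)) ^ (1/(p i + 1)) + C i * ρ :=
      le_trans hMk (add_le_add le_rfl (le_trans hmono hZ))
    have harith := aux_arith (a i) (C i) ρ D
      ((∫ x, (w x) ^ (p i + 1)) ^ (1/(p i + 1)))
      ((∫ x, (max (-uhat x) 0) ^ (p i + 1)) ^ (1/(p i + 1)))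
      (p i) (ha i hi) hCi hρ hD0 hpi (Real.rpow_nonneg hQnn _) hYnn hS1 hX2
    rw [hXQ] at harith
    linarith
  -- combine
  have hsum : ∑ i ∈ Finset.Icc 1 n, a i * ∫ x, (w x) ^ (p i + 1) ≤
      (∑ i ∈ Finset.Icc 1 n, a i * C i ^ 2 *
        ((∫ x, (max (-uhat x) 0) ^ (p i + 1)) ^ (1 / (p i + 1)) + C i * ρ)
          ^ (p i - 1)) * D := by
    rw [Finset.sum_mul]
    exact Finset.sum_le_sum hperi
  -- conclude D = 0 and ∫ w² = 0
  obtain ⟨hDzero, hW2⟩ := aux_final lam lam₁ D (∫ x, (w x)^2) _ _ hlam0 hlam₁ hD0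
    hW2nn hPo hDle hsum hcond
  have hae : (fun x => (w x)^2) =ᵐ[volume] 0 :=
    (integral_eq_zero_iff_of_nonneg (fun x => sq_nonneg (w x)) Iw2).1 hW2
  have heq0 : (fun x => (w x)^2) = 0 :=
    (Continuous.ae_eq_iff_eq volume (hwcont.pow 2) continuous_const).1 hae
  intro x
  have hx2 : (w x)^2 = 0 := congrFun heq0 x
  have hwx : w x = 0 := by
    have := sq_nonneg (w x)
    nlinarith [hw0 x]
  have hle : -u x ≤ w x := le_max_left _ _
  linarith
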